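/- Let (G, Σ, χ, w) be a Decoder Retrieval instance and let a ∈ Σ. If the color class V_a is an independent set in G, then for every solution D for the instance, the decoder D ∖ {(a,a)} is also a solution. -/

import Mathlib

/-- The letter graph `G(D, w)` on vertex set `Fin w.length`: positions `i < j`
are adjacent iff the ordered pair of letters `(w_i, w_j)` lies in the decoder `D`. -/
def letterGraph {A : Type*} (D : Set (A × A)) (w : List A) : SimpleGraph (Fin w.length) where
  Adj i j := (i < j ∧ (w.get i, w.get j) ∈ D) ∨ (j < i ∧ (w.get j, w.get i) ∈ D)
  symm := by constructor; intro i j h; exact h.symm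
  loopless := by constructor; intro i h; rcases h with ⟨h, -⟩ | ⟨h, -⟩ <;> exact lt_irrefl _ h

/-- `D` is a solution for the decoder-retrieval data `(G, χ, w)`: there is a graph
isomorphism from `G` to the letter graph `G(D, w)` that respects the coloring `χ`. -/
def IsSolution {V A : Type*} (G : SimpleGraph V) (χ : V → A) (w : List A)
    (D : Set (A × A)) : Prop :=
  ∃ f : G ≃g letterGraph D w, ∀ v : V, χ v = w.get (f v)

/-- If the color class `V_a` is an independent set in `G`, then for every solution
`D` of the Decoder Retrieval instance, `D \ {(a, a)}` is also a solution. -/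
theorem solution_diff_self_pair_of_independent {V A : Type*} [Fintype V] [Fintype A] [DecidableEq A]
    (G : SimpleGraph V) (χ : V → A) (w : List A)
    (hcls : ∀ b : A, ∃ v : V, χ v = b)
    (hlen : w.length = Fintype.card V)
    (hcount : ∀ b : A, w.count b = (Finset.univ.filter fun v => χ v = b).card)
    (a : A)
    (hindep : ∀ u v : V, χ u = a → χ v = a → u ≠ v → ¬ G.Adj u v)
    (D : Set (A × A)) (hD : IsSolution G χ w D) :
    IsSolution G χ w (D \ {(a, a)}) := by
  obtain ⟨f, hf⟩ := hD
  refine ⟨⟨f.toEquiv, ?_⟩, hf⟩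
  intro u v
  constructor
  · intro h
    apply f.map_adj_iff.mp
    rcases h with ⟨hlt, hmem, -⟩ | ⟨hlt, hmem, -⟩
    · exact Or.inl ⟨hlt, hmem⟩
    · exact Or.inr ⟨hlt, hmem⟩
  · intro h
    have hadj : (letterGraph D w).Adj (f u) (f v) := f.map_adj_iff.mpr h
    have hne : u ≠ v := fun e => G.loopless.irrefl u (e ▸ h)
    have hnot : ¬ (χ u = a ∧ χ v = a) := by
      rintro ⟨h1, h2⟩; exact hindep u v h1 h2 hne h
    rcases hadj with ⟨hlt, hmem⟩ | ⟨hlt, hmem⟩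
    · left; refine ⟨hlt, hmem, ?_⟩
      simp only [Set.mem_singleton_iff, Prod.mk.injEq]
      rintro ⟨e1, e2⟩
      exact hnot ⟨(hf u).trans e1, (hf v).trans e2⟩
    · right; refine ⟨hlt, hmem, ?_⟩
      simp only [Set.mem_singleton_iff, Prod.mk.injEq]
      rintro ⟨e1, e2⟩
      exact hnot ⟨(hf u).trans e2, (hf v).trans e1⟩
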